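/- Let ξ = (ω, v, x) ∈ ℝ⁹ with ω ≠ 0. Then the matrix exponential of ξ^∧ is exp_m(ξ^∧) = [[exp_m((ω)ₓ), N(ω)v, N(ω)x],[0₁ₓ₃, 1, 0],[0₁ₓ₃, 0, 1]], where N(ω) = I₃ + ((1 − cos‖ω‖)/‖ω‖²)(ω)ₓ + ((‖ω‖ − sin‖ω‖)/‖ω‖³)((ω)ₓ)². -/

import Mathlib

open Matrix

noncomputable section

abbrev M3 := Matrix (Fin 3) (Fin 3) ℝ
abbrev M5 := Matrix (Fin 5) (Fin 5) ℝ
abbrev V3 := Fin 3 → ℝ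
abbrev V9 := V3 × V3 × V3

/-- Skew-symmetric cross-product matrix `(ω)ₓ`. -/
def skew (ω : V3) : M3 := !![0, -ω 2, ω 1; ω 2, 0, -ω 0; -ω 1, ω 0, 0]

/-- 5×5 block matrix `[[A, v, x],[0₁ₓ₃, d, 0],[0₁ₓ₃, 0, e]]`. -/
def blk (A : M3) (v x : V3) (d e : ℝ) : M5 :=
  !![A 0 0, A 0 1, A 0 2, v 0, x 0;
     A 1 0, A 1 1, A 1 2, v 1, x 1;
     A 2 0, A 2 1, A 2 2, v 2, x 2;
     0, 0, 0, d, 0;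
     0, 0, 0, 0, e]

/-- Element of `SE₂(3)` built from rotation `R`, velocity `V`, position `X`. -/
def se23 (R : M3) (V X : V3) : M5 := blk R V X 1 1

/-- The hat map `ξ^∧` of `ξ = (ω, v, x) ∈ ℝ⁹`. -/
def hat (ω v x : V3) : M5 := blk (skew ω) v x 0 0

def hat9 (ξ : V9) : M5 := hat ξ.1 ξ.2.1 ξ.2.2

def IsSO3 (R : M3) : Prop := Rᵀ * R = 1 ∧ R.det = 1

def IsSE23 (T : M5) : Prop := ∃ R V X, IsSO3 R ∧ T = se23 R V X

/-- Rotation block of a 5×5 matrix. -/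
def Rof (T : M5) : M3 := Matrix.of fun i j => T (Fin.castLE (by omega) i) (Fin.castLE (by omega) j)

/-- Velocity column of a 5×5 matrix. -/
def Vof (T : M5) : V3 := fun i => T (Fin.castLE (by omega) i) 3

/-- Position column of a 5×5 matrix. -/
def Xof (T : M5) : V3 := fun i => T (Fin.castLE (by omega) i) 4

/-- Adjoint of `T ∈ SE₂(3)` acting on `ξ = (ω, v, x) ∈ ℝ⁹`:
  `[[R, 0, 0],[(V)ₓR, R, 0],[(X)ₓR, 0, R]]`. -/
def Ad (T : M5) (ξ : V9) : V9 :=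
  (Rof T *ᵥ ξ.1,
   (skew (Vof T) * Rof T) *ᵥ ξ.1 + Rof T *ᵥ ξ.2.1,
   (skew (Xof T) * Rof T) *ᵥ ξ.1 + Rof T *ᵥ ξ.2.2)

/-- `f(T)` : places the velocity column of `T` in the position column. -/
def fmap (T : M5) : M5 := blk 0 0 (Vof T) 0 0

/-- `Φ_t` : maps `[[R,V,X],...]` to `[[R,V,X+tV],...]` (acting on the top three rows). -/
def Phi (t : ℝ) (T : M5) : M5 :=
  Matrix.of fun i j => if (i : ℕ) < 3 ∧ (j : ℕ) = 4 then T i j + t * T i 3 else T i j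

/-- The linear map `F : (ω,v,x) ↦ (ω, v, x + Δt·v)`. -/
def Fmap (Δt : ℝ) (ξ : V9) : V9 := (ξ.1, ξ.2.1, ξ.2.2 + Δt • ξ.2.1)

/-- Euclidean norm of a vector in `ℝ³`. -/
def enorm3 (ω : V3) : ℝ := Real.sqrt (ω 0 ^ 2 + ω 1 ^ 2 + ω 2 ^ 2)

/-- `N(ω) = I₃ + ((1 − cos‖ω‖)/‖ω‖²)(ω)ₓ + ((‖ω‖ − sin‖ω‖)/‖ω‖³)((ω)ₓ)²`. -/
def Nmat (ω : V3) : M3 :=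
  1 + ((1 - Real.cos (enorm3 ω)) / enorm3 ω ^ 2) • skew ω
    + ((enorm3 ω - Real.sin (enorm3 ω)) / enorm3 ω ^ 3) • (skew ω * skew ω)

open Nat NormedSpace Finset

lemma enorm3_sq (ω : V3) : enorm3 ω ^ 2 = ω 0 ^ 2 + ω 1 ^ 2 + ω 2 ^ 2 :=
  Real.sq_sqrt (by positivity)

lemma enorm3_ne (ω : V3) (hω : ω ≠ 0) : enorm3 ω ≠ 0 := by
  refine ne_of_gt (Real.sqrt_pos.mpr ?_)
  by_contra h
  push_neg at h
  have h0 := sq_nonneg (ω 0); have h1 := sq_nonneg (ω 1); have h2 := sq_nonneg (ω 2)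
  apply hω
  funext i
  fin_cases i
  · show ω 0 = 0; nlinarith [sq_abs (ω 0), abs_nonneg (ω 0)]
  · show ω 1 = 0; nlinarith [sq_abs (ω 1), abs_nonneg (ω 1)]
  · show ω 2 = 0; nlinarith [sq_abs (ω 2), abs_nonneg (ω 2)]

lemma skew_cube (ω : V3) : skew ω ^ 3 = (-(enorm3 ω ^ 2)) • skew ω := by
  have h := enorm3_sq ω
  ext i j
  fin_cases i <;> fin_cases j <;>
    simp [skew, pow_succ, Matrix.mul_apply, Fin.sum_univ_three, h] <;> ring

lemma blk_mul (A B : M3) (a b c d : V3) :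
    blk A a b 0 0 * blk B c d 0 0 = blk (A * B) (A *ᵥ c) (A *ᵥ d) 0 0 := by
  ext i j
  fin_cases i <;> fin_cases j <;>
    simp [blk, Matrix.mul_apply, Matrix.mulVec, dotProduct,
      Fin.sum_univ_five, Fin.sum_univ_three, Matrix.vecHead, Matrix.vecTail] <;> ring

lemma skew_pow_odd (ω : V3) (k : ℕ) :
    skew ω ^ (2 * k + 1) = ((-(enorm3 ω ^ 2)) ^ k) • skew ω := by
  induction k with
  | zero => simp
  | succ k ih =>
    have h1 : 2 * (k + 1) + 1 = (2 * k + 1) + 2 := by ring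
    have h2 : skew ω * skew ω ^ 2 = skew ω ^ 3 := (pow_succ' (skew ω) 2).symm
    rw [h1, pow_add, ih, smul_mul_assoc, h2, skew_cube, smul_smul, ← pow_succ]

lemma skew_pow_even (ω : V3) (k : ℕ) :
    skew ω ^ (2 * k + 2) = ((-(enorm3 ω ^ 2)) ^ k) • (skew ω * skew ω) := by
  have : 2 * k + 2 = (2 * k + 1) + 1 := by ring
  rw [this, pow_succ, skew_pow_odd, smul_mul_assoc]

lemma hat_pow (ω v x : V3) (n : ℕ) :
    hat ω v x ^ (n + 1) = blk (skew ω ^ (n + 1)) (skew ω ^ n *ᵥ v) (skew ω ^ n *ᵥ x) 0 0 := by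
  induction n with
  | zero => simp [hat, Matrix.one_mulVec]
  | succ n ih =>
    rw [pow_succ, ih, hat, blk_mul, ← pow_succ]

lemma hasSum_A (θ : ℝ) (hθ : θ ≠ 0) :
    HasSum (fun k : ℕ => (((2 * k + 2)! : ℝ))⁻¹ * (-(θ ^ 2)) ^ k)
      ((1 - Real.cos θ) / θ ^ 2) := by
  have hc : (-(θ ^ 2)) ≠ 0 := neg_ne_zero.mpr (pow_ne_zero _ hθ)
  have h0 : HasSum (fun n : ℕ => (-1 : ℝ) ^ n * θ ^ (2 * n) / (2 * n)!)
      ((Real.cos θ - 1) + ∑ i ∈ Finset.range 1, (-1 : ℝ) ^ i * θ ^ (2 * i) / (2 * i)!) := by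
    simpa using Real.hasSum_cos θ
  have h1 := (hasSum_nat_add_iff 1).mpr h0
  have hfun : (fun k : ℕ => (-1 : ℝ) ^ (k + 1) * θ ^ (2 * (k + 1)) / (2 * (k + 1))!)
      = fun k : ℕ => (-(θ ^ 2)) * ((((2 * k + 2)! : ℝ))⁻¹ * (-(θ ^ 2)) ^ k) := by
    funext k
    have h2 : 2 * (k + 1) = 2 * k + 2 := by ring
    rw [pow_mul, neg_pow (θ ^ 2), pow_succ, pow_succ, h2, div_eq_mul_inv]
    ring
  rw [hfun] at h1
  have h3 := h1.mul_left (-(θ ^ 2))⁻¹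
  simp only [inv_mul_cancel_left₀ hc] at h3
  convert h3 using 1
  · rfl
  field_simp
  ring

lemma hasSum_B (θ : ℝ) (hθ : θ ≠ 0) :
    HasSum (fun k : ℕ => (((2 * k + 3)! : ℝ))⁻¹ * (-(θ ^ 2)) ^ k)
      ((θ - Real.sin θ) / θ ^ 3) := by
  have hc : (-(θ ^ 3)) ≠ 0 := neg_ne_zero.mpr (pow_ne_zero _ hθ)
  have h0 : HasSum (fun n : ℕ => (-1 : ℝ) ^ n * θ ^ (2 * n + 1) / (2 * n + 1)!)
      ((Real.sin θ - θ) + ∑ i ∈ Finset.range 1, (-1 : ℝ) ^ i * θ ^ (2 * i + 1) / (2 * i + 1)!) := by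
    simpa using Real.hasSum_sin θ
  have h1 := (hasSum_nat_add_iff 1).mpr h0
  have hfun : (fun k : ℕ => (-1 : ℝ) ^ (k + 1) * θ ^ (2 * (k + 1) + 1) / (2 * (k + 1) + 1)!)
      = fun k : ℕ => (-(θ ^ 3)) * ((((2 * k + 3)! : ℝ))⁻¹ * (-(θ ^ 2)) ^ k) := by
    funext k
    have h2 : 2 * (k + 1) + 1 = 2 * k + 3 := by ring
    rw [pow_succ θ, pow_mul, neg_pow (θ ^ 2), pow_succ, pow_succ, h2, div_eq_mul_inv]
    ring
  rw [hfun] at h1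
  have h3 := h1.mul_left (-(θ ^ 3))⁻¹
  simp only [inv_mul_cancel_left₀ hc] at h3
  convert h3 using 1
  · rfl
  field_simp
  ring

lemma hasSum_N (ω : V3) (hω : ω ≠ 0) :
    HasSum (fun n : ℕ => (((n + 1)! : ℝ))⁻¹ • skew ω ^ n) (Nmat ω) := by
  set θ := enorm3 ω with hθdef
  have hθ : θ ≠ 0 := enorm3_ne ω hω
  have he : HasSum (fun k : ℕ => (((2 * k + 2)! : ℝ))⁻¹ • skew ω ^ (2 * k + 1))
      (((1 - Real.cos θ) / θ ^ 2) • skew ω) := by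
    have h := (hasSum_A θ hθ).smul_const (skew ω)
    have heq : (fun k : ℕ => (((2 * k + 2)! : ℝ))⁻¹ • skew ω ^ (2 * k + 1))
        = fun k : ℕ => ((((2 * k + 2)! : ℝ))⁻¹ * (-(θ ^ 2)) ^ k) • skew ω := by
      funext k; rw [skew_pow_odd, smul_smul]
    rw [heq]; exact h
  have ho : HasSum (fun k : ℕ => (((2 * k + 3)! : ℝ))⁻¹ • skew ω ^ (2 * k + 2))
      (((θ - Real.sin θ) / θ ^ 3) • (skew ω * skew ω)) := by
    have h := (hasSum_B θ hθ).smul_const (skew ω * skew ω)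
    have heq : (fun k : ℕ => (((2 * k + 3)! : ℝ))⁻¹ • skew ω ^ (2 * k + 2))
        = fun k : ℕ => ((((2 * k + 3)! : ℝ))⁻¹ * (-(θ ^ 2)) ^ k) • (skew ω * skew ω) := by
      funext k; rw [skew_pow_even, smul_smul]
    rw [heq]; exact h
  have h1 : HasSum (fun n : ℕ => (((n + 1 + 1)! : ℝ))⁻¹ • skew ω ^ (n + 1))
      (((1 - Real.cos θ) / θ ^ 2) • skew ω
        + ((θ - Real.sin θ) / θ ^ 3) • (skew ω * skew ω)) := by
    exact HasSum.even_add_odd (by exact he) (by exact ho)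
  have h2 := (hasSum_nat_add_iff
    (f := fun n : ℕ => (((n + 1)! : ℝ))⁻¹ • skew ω ^ n) 1).mp h1
  have h3 : (∑ i ∈ Finset.range 1, (((i + 1)! : ℝ))⁻¹ • skew ω ^ i) = (1 : M3) := by
    simp
  rw [h3] at h2
  convert h2 using 1
  · rfl
  simp only [Nmat, ← hθdef]
  abel

lemma smul_blk (r : ℝ) (A : M3) (a b : V3) :
    r • blk A a b 0 0 = blk (r • A) (r • a) (r • b) 0 0 := by
  ext i j
  fin_cases i <;> fin_cases j <;> simp [blk, Matrix.vecHead, Matrix.vecTail]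

lemma blk_add (A B : M3) (a b c d : V3) :
    blk A a b 0 0 + blk B c d 0 0 = blk (A + B) (a + c) (b + d) 0 0 := by
  ext i j
  fin_cases i <;> fin_cases j <;> simp [blk, Matrix.vecHead, Matrix.vecTail]

lemma hasSum_exp_skew (ω : V3) :
    HasSum (fun n : ℕ => ((n ! : ℝ))⁻¹ • skew ω ^ n) (NormedSpace.exp (skew ω)) := by
  letI : SeminormedRing M3 := Matrix.linftyOpSemiNormedRing
  letI : NormedRing M3 := Matrix.linftyOpNormedRing
  letI : NormedAlgebra ℝ M3 := Matrix.linftyOpNormedAlgebra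
  exact NormedSpace.exp_series_hasSum_exp' (𝕂 := ℝ) (skew ω)

lemma hasSum_exp_skew' (ω : V3) :
    HasSum (fun n : ℕ => (((n + 1)! : ℝ))⁻¹ • skew ω ^ (n + 1))
      (NormedSpace.exp (skew ω) - 1) := by
  have h0 : HasSum (fun n : ℕ => ((n ! : ℝ))⁻¹ • skew ω ^ n)
      ((NormedSpace.exp (skew ω) - 1) + ∑ i ∈ Finset.range 1, ((i ! : ℝ))⁻¹ • skew ω ^ i) := by
    simpa using hasSum_exp_skew ω
  exact (hasSum_nat_add_iff (f := fun n : ℕ => ((n ! : ℝ))⁻¹ • skew ω ^ n) 1).mpr h0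

lemma continuous_mulVec_right (u : V3) : Continuous fun M : M3 => M *ᵥ u := by
  apply continuous_pi; intro i
  simp only [Matrix.mulVec, dotProduct]
  exact continuous_finset_sum _ fun j _ =>
    (by fun_prop)

/-- mulVec as an AddMonoidHom in the matrix argument. -/
def mvHom (u : V3) : M3 →+ V3 where
  toFun M := M *ᵥ u
  map_zero' := by simp [Matrix.zero_mulVec]
  map_add' A B := Matrix.add_mulVec A B u

lemma hasSum_Nv (ω u : V3) (hω : ω ≠ 0) :
    HasSum (fun n : ℕ => (((n + 1)! : ℝ))⁻¹ • (skew ω ^ n *ᵥ u)) (Nmat ω *ᵥ u) := by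
  have h := (hasSum_N ω hω).map (mvHom u) (continuous_mulVec_right u)
  have heq : ((mvHom u) ∘ fun n : ℕ => (((n + 1)! : ℝ))⁻¹ • skew ω ^ n)
      = fun n : ℕ => (((n + 1)! : ℝ))⁻¹ • (skew ω ^ n *ᵥ u) := by
    funext n
    simp [mvHom, Matrix.smul_mulVec]
  rw [heq] at h
  exact h

/-- The block map as an AddMonoidHom. -/
def blkHom : (M3 × V3 × V3) →+ M5 where
  toFun p := blk p.1 p.2.1 p.2.2 0 0
  map_zero' := by ext i j; fin_cases i <;> fin_cases j <;> simp [blk, Matrix.vecHead, Matrix.vecTail]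
  map_add' p q := by ext i j; fin_cases i <;> fin_cases j <;> simp [blk, Matrix.vecHead, Matrix.vecTail]

lemma continuous_blkHom : Continuous (blkHom : (M3 × V3 × V3) → M5) := by
  apply continuous_pi; intro i; apply continuous_pi; intro j
  fin_cases i <;> fin_cases j <;> simp [blkHom, blk, Matrix.vecHead, Matrix.vecTail] <;> fun_prop

lemma blk_sub_add_one (E : M3) (a b : V3) :
    blk (E - 1) a b 0 0 + 1 = se23 E a b := by
  ext i j
  fin_cases i <;> fin_cases j <;>
    simp [blk, se23, Matrix.one_apply, Matrix.vecHead, Matrix.vecTail]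

theorem stmt_0_aux (ω v x : V3) (hω : ω ≠ 0) :
    NormedSpace.exp (hat ω v x)
      = se23 (NormedSpace.exp (skew ω)) (Nmat ω *ᵥ v) (Nmat ω *ᵥ x) := by
  have hv := hasSum_Nv ω v hω
  have hx := hasSum_Nv ω x hω
  have hR := hasSum_exp_skew' ω
  have hshift : HasSum (fun n : ℕ => (((n + 1)! : ℝ))⁻¹ • hat ω v x ^ (n + 1))
      (blk (NormedSpace.exp (skew ω) - 1) (Nmat ω *ᵥ v) (Nmat ω *ᵥ x) 0 0) := by
    have h := (hR.prodMk (hv.prodMk hx)).map blkHom continuous_blkHom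
    have heq : (blkHom ∘ fun n : ℕ =>
        ((((n + 1)! : ℝ))⁻¹ • skew ω ^ (n + 1),
         (((n + 1)! : ℝ))⁻¹ • (skew ω ^ n *ᵥ v),
         (((n + 1)! : ℝ))⁻¹ • (skew ω ^ n *ᵥ x)))
        = fun n : ℕ => (((n + 1)! : ℝ))⁻¹ • hat ω v x ^ (n + 1) := by
      funext n
      simp only [Function.comp_apply, blkHom, AddMonoidHom.coe_mk, ZeroHom.coe_mk]
      rw [hat_pow, smul_blk]
    rw [heq] at h
    exact h
  have h2 := (hasSum_nat_add_iff
    (f := fun n : ℕ => ((n ! : ℝ))⁻¹ • hat ω v x ^ n) 1).mp hshift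
  have h3 : (∑ i ∈ Finset.range 1, ((i ! : ℝ))⁻¹ • hat ω v x ^ i) = (1 : M5) := by
    simp
  rw [h3, blk_sub_add_one] at h2
  rw [NormedSpace.exp_eq_tsum (𝕂 := ℝ)]
  exact h2.tsum_eq

/-- closed form of the exponential map of `SE₂(3)`. -/
theorem stmt_0 (ω v x : V3) (hω : ω ≠ 0) :
    NormedSpace.exp (hat ω v x)
      = se23 (NormedSpace.exp (skew ω)) (Nmat ω *ᵥ v) (Nmat ω *ᵥ x) :=
  stmt_0_aux ω v x hω
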